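/- arXiv:1006.5360 — 3 statements merged into one kernel-verified Lean document; each statement's English description precedes it below -/
import Mathlib

section
/- Assume (ξ, ζ) is a Neumann pair for V and let s ∈ (0,1). Define g : [0,1] → ℝ by g(r) = ξ(r)/ξ(s) for r ∈ [0,s] and g(r) = ζ(r)/ζ(s) for r ∈ (s,1] (so that g(r) = G(r,s)/G(s,s)). Then ∫₀¹ (g'(r)² + V(r)·g(r)²)·r^{n−1} dr = 1/(ξ(s)·ζ(s)) = F(s), where g'(r) denotes the derivative of g at r (defined for r ∈ (0,1], r ≠ s). -/
open Set Filter MeasureTheory Topology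

/-- A *Neumann pair* for the radial operator `-u'' - ((n-1)/r) u' + V u` on `(0,1]`:
two positive solutions `ξ, ζ` (with first derivatives `ξ', ζ'` and second derivatives
`ξ'', ζ''` on `(0,1]`), continuous on `[0,1]`, twice continuously differentiable on `(0,1]`,
with `ξ'(0⁺) = 0`, `ζ'(1) = 0` and Wronskian `ξ' ζ - ξ ζ' = r^(1-n)`. -/
structure NeumannPair (n : ℕ) (V ξ ζ ξ' ζ' ξ'' ζ'' : ℝ → ℝ) : Prop where
  cont_xi : ContinuousOn ξ (Icc 0 1)
  cont_zeta : ContinuousOn ζ (Icc 0 1)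
  pos_xi : ∀ r ∈ Ioc (0:ℝ) 1, 0 < ξ r
  pos_zeta : ∀ r ∈ Ioc (0:ℝ) 1, 0 < ζ r
  deriv_xi : ∀ r ∈ Ioc (0:ℝ) 1, HasDerivWithinAt ξ (ξ' r) (Ioc 0 1) r
  deriv2_xi : ∀ r ∈ Ioc (0:ℝ) 1, HasDerivWithinAt ξ' (ξ'' r) (Ioc 0 1) r
  cont_xi'' : ContinuousOn ξ'' (Ioc 0 1)
  deriv_zeta : ∀ r ∈ Ioc (0:ℝ) 1, HasDerivWithinAt ζ (ζ' r) (Ioc 0 1) r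
  deriv2_zeta : ∀ r ∈ Ioc (0:ℝ) 1, HasDerivWithinAt ζ' (ζ'' r) (Ioc 0 1) r
  cont_zeta'' : ContinuousOn ζ'' (Ioc 0 1)
  ode_xi : ∀ r ∈ Ioc (0:ℝ) 1, -ξ'' r - (((n:ℝ) - 1) / r) * ξ' r + V r * ξ r = 0
  ode_zeta : ∀ r ∈ Ioc (0:ℝ) 1, -ζ'' r - (((n:ℝ) - 1) / r) * ζ' r + V r * ζ r = 0
  bc_xi : Tendsto ξ' (𝓝[>] (0:ℝ)) (𝓝 0)
  bc_zeta : ζ' 1 = 0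
  wronskian : ∀ r ∈ Ioc (0:ℝ) 1, ξ' r * ζ r - ξ r * ζ' r = r ^ (1 - (n:ℝ))


/-- Energy of the normalized Green function equals `F(s)`: if `(ξ, ζ)` is a Neumann pair
for `V`, `s ∈ (0,1)` and `g(r) = ξ(r)/ξ(s)` for `r ≤ s`, `g(r) = ζ(r)/ζ(s)` for `r > s`
(so `g(r) = G(r,s)/G(s,s)`), then
`∫₀¹ (g'(r)² + V(r) g(r)²) r^(n-1) dr = 1/(ξ(s)ζ(s)) = F(s)`. -/
theorem energy_of_normalized_green (n : ℕ) (hn : 2 ≤ n) (V ξ ζ ξ' ζ' ξ'' ζ'' : ℝ → ℝ)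
    (hVcont : ContinuousOn V (Icc 0 1))
    (hVnonneg : ∀ r ∈ Icc (0:ℝ) 1, 0 ≤ V r)
    (hVnontriv : ∃ r ∈ Icc (0:ℝ) 1, V r ≠ 0)
    (hpair : NeumannPair n V ξ ζ ξ' ζ' ξ'' ζ'')
    (s : ℝ) (hs : s ∈ Ioo (0:ℝ) 1)
    (g : ℝ → ℝ) (hg : ∀ r, g r = if r ≤ s then ξ r / ξ s else ζ r / ζ s) :
    ∫ r in Ioo (0:ℝ) 1, (deriv g r ^ 2 + V r * g r ^ 2) * r ^ ((n:ℝ) - 1) =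
      1 / (ξ s * ζ s) := by
  obtain ⟨hs0, hs1⟩ := hs
  set e : ℝ := (n:ℝ) - 1 with he
  have hn2 : (2:ℝ) ≤ (n:ℝ) := by exact_mod_cast hn
  have he1 : (1:ℝ) ≤ e := by rw [he]; linarith
  have he0 : e ≠ 0 := by linarith
  have hep : (0:ℝ) ≤ e := by linarith
  -- upgrade derivatives to HasDerivAt on the interior
  have hmem : ∀ r ∈ Ioo (0:ℝ) 1, Ioc (0:ℝ) 1 ∈ 𝓝 r := fun r hr =>
    mem_of_superset (Ioo_mem_nhds hr.1 hr.2) Ioo_subset_Ioc_self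
  have hIoc : ∀ r ∈ Ioo (0:ℝ) 1, r ∈ Ioc (0:ℝ) 1 := fun r hr => ⟨hr.1, hr.2.le⟩
  have hx1 : ∀ r ∈ Ioo (0:ℝ) 1, HasDerivAt ξ (ξ' r) r := fun r hr =>
    (hpair.deriv_xi r (hIoc r hr)).hasDerivAt (hmem r hr)
  have hx2 : ∀ r ∈ Ioo (0:ℝ) 1, HasDerivAt ξ' (ξ'' r) r := fun r hr =>
    (hpair.deriv2_xi r (hIoc r hr)).hasDerivAt (hmem r hr)
  have hz1 : ∀ r ∈ Ioo (0:ℝ) 1, HasDerivAt ζ (ζ' r) r := fun r hr =>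
    (hpair.deriv_zeta r (hIoc r hr)).hasDerivAt (hmem r hr)
  have hz2 : ∀ r ∈ Ioo (0:ℝ) 1, HasDerivAt ζ' (ζ'' r) r := fun r hr =>
    (hpair.deriv2_zeta r (hIoc r hr)).hasDerivAt (hmem r hr)
  have hcx' : ContinuousOn ξ' (Ioc 0 1) := fun r hr =>
    (hpair.deriv2_xi r hr).continuousWithinAt
  have hcz' : ContinuousOn ζ' (Ioc 0 1) := fun r hr =>
    (hpair.deriv2_zeta r hr).continuousWithinAt
  have hrpowC : ContinuousOn (fun x : ℝ => x ^ e) (Ioc 0 1) := fun x hx =>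
    (Real.continuousAt_rpow_const x e (Or.inl hx.1.ne')).continuousWithinAt
  -- the two relevant functions Φ, Ψ and antiderivatives H₁, H₂
  set Φ : ℝ → ℝ := fun r => (ξ' r ^ 2 + V r * ξ r ^ 2) * r ^ e with hΦ
  set Ψ : ℝ → ℝ := fun r => (ζ' r ^ 2 + V r * ζ r ^ 2) * r ^ e with hΨ
  set H₁ : ℝ → ℝ := fun r => r ^ e * (ξ r * ξ' r) with hH₁def
  set H₂ : ℝ → ℝ := fun r => r ^ e * (ζ r * ζ' r) with hH₂def
  have hH₁d : ∀ r ∈ Ioo (0:ℝ) 1, HasDerivAt H₁ (Φ r) r := by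
    intro r hr
    have h := (Real.hasDerivAt_rpow_const (p := e) (Or.inl hr.1.ne')).mul
      ((hx1 r hr).mul (hx2 r hr))
    refine h.congr_deriv ?_
    symm
    have hode := hpair.ode_xi r (hIoc r hr)
    have hxx : ξ'' r = V r * ξ r - (e / r) * ξ' r := by rw [he]; linarith
    have hrp : r ^ (e - 1) = r ^ e / r := by
      rw [Real.rpow_sub hr.1, Real.rpow_one]
    simp only [hΦ, Pi.mul_apply]
    rw [hxx, hrp]
    field_simp
    try ring
  have hH₂d : ∀ r ∈ Ioo (0:ℝ) 1, HasDerivAt H₂ (Ψ r) r := by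
    intro r hr
    have h := (Real.hasDerivAt_rpow_const (p := e) (Or.inl hr.1.ne')).mul
      ((hz1 r hr).mul (hz2 r hr))
    refine h.congr_deriv ?_
    symm
    have hode := hpair.ode_zeta r (hIoc r hr)
    have hzz : ζ'' r = V r * ζ r - (e / r) * ζ' r := by rw [he]; linarith
    have hrp : r ^ (e - 1) = r ^ e / r := by
      rw [Real.rpow_sub hr.1, Real.rpow_one]
    simp only [hΨ, Pi.mul_apply]
    rw [hzz, hrp]
    field_simp
    try ring
  -- continuity on [0,s] of H₁ and Φ (using ξ'(0⁺)=0 and r^e → 0)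
  have hsub01 : Icc (0:ℝ) s ⊆ Icc 0 1 := Icc_subset_Icc le_rfl hs1.le
  have hlow : 𝓝[Ioc (0:ℝ) s] 0 ≤ 𝓝[>] (0:ℝ) := nhdsWithin_mono _ Ioc_subset_Ioi_self
  have hlow' : 𝓝[Ioc (0:ℝ) s] 0 ≤ 𝓝[Icc (0:ℝ) 1] 0 :=
    nhdsWithin_mono _ (fun x hx => ⟨hx.1.le, hx.2.trans hs1.le⟩)
  have hrpow0 : Tendsto (fun x : ℝ => x ^ e) (𝓝[Ioc (0:ℝ) s] 0) (𝓝 0) := by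
    have := (Real.continuousAt_rpow_const 0 e (Or.inr hep)).tendsto
    rw [Real.zero_rpow he0] at this
    exact this.mono_left (nhdsWithin_le_nhds)
  have hxi0 : Tendsto ξ (𝓝[Ioc (0:ℝ) s] 0) (𝓝 (ξ 0)) :=
    ((hpair.cont_xi 0 ⟨le_rfl, zero_le_one⟩).tendsto).mono_left hlow'
  have hxi'0 : Tendsto ξ' (𝓝[Ioc (0:ℝ) s] 0) (𝓝 0) := hpair.bc_xi.mono_left hlow
  have hV0 : Tendsto V (𝓝[Ioc (0:ℝ) s] 0) (𝓝 (V 0)) :=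
    ((hVcont 0 ⟨le_rfl, zero_le_one⟩).tendsto).mono_left hlow'
  have hcxIoo : ∀ r, 0 < r → r < 1 → ContinuousAt ξ r := fun r h1 h2 =>
    (hx1 r ⟨h1, h2⟩).continuousAt
  have hcx'Ioo : ∀ r, 0 < r → r < 1 → ContinuousAt ξ' r := fun r h1 h2 =>
    (hx2 r ⟨h1, h2⟩).continuousAt
  have hH₁c : ContinuousOn H₁ (Icc 0 s) := by
    intro r hr
    rcases eq_or_lt_of_le hr.1 with h0 | h0
    · rw [← continuousWithinAt_diff_self, ← h0, Icc_diff_left]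
      have : Tendsto H₁ (𝓝[Ioc (0:ℝ) s] 0) (𝓝 (0 * (ξ 0 * 0))) :=
        hrpow0.mul (hxi0.mul hxi'0)
      simpa [ContinuousWithinAt, hH₁def, Real.zero_rpow he0] using this
    · have hr1 : r < 1 := lt_of_le_of_lt hr.2 hs1
      exact (((Real.continuousAt_rpow_const r e (Or.inl h0.ne')).mul
        ((hcxIoo r h0 hr1).mul (hcx'Ioo r h0 hr1))).continuousWithinAt)
  have hΦc : ContinuousOn Φ (Icc 0 s) := by
    intro r hr
    rcases eq_or_lt_of_le hr.1 with h0 | h0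
    · rw [← continuousWithinAt_diff_self, ← h0, Icc_diff_left]
      have : Tendsto Φ (𝓝[Ioc (0:ℝ) s] 0)
          (𝓝 ((0 ^ 2 + V 0 * ξ 0 ^ 2) * 0)) :=
        (((hxi'0.pow 2).add (hV0.mul (hxi0.pow 2))).mul hrpow0)
      simpa [ContinuousWithinAt, hΦ, Real.zero_rpow he0] using this
    · have hr1 : r < 1 := lt_of_le_of_lt hr.2 hs1
      have hVc : ContinuousWithinAt V (Icc 0 s) r :=
        (hVcont r (hsub01 hr)).mono hsub01
      exact ((((hcx'Ioo r h0 hr1).continuousWithinAt.pow 2).add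
        (hVc.mul ((hcxIoo r h0 hr1).continuousWithinAt.pow 2))).mul
        (Real.continuousAt_rpow_const r e (Or.inl h0.ne')).continuousWithinAt)
  -- continuity on [s,1] of H₂ and Ψ
  have hsubs1 : Icc s 1 ⊆ Ioc (0:ℝ) 1 := fun x hx => ⟨lt_of_lt_of_le hs0 hx.1, hx.2⟩
  have hsubs1' : Icc s 1 ⊆ Icc (0:ℝ) 1 := Icc_subset_Icc hs0.le le_rfl
  have hH₂c : ContinuousOn H₂ (Icc s 1) :=
    (hrpowC.mono hsubs1).mul ((hpair.cont_zeta.mono hsubs1').mul (hcz'.mono hsubs1))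
  have hΨc : ContinuousOn Ψ (Icc s 1) :=
    (((hcz'.mono hsubs1).pow 2).add
      ((hVcont.mono hsubs1').mul ((hpair.cont_zeta.mono hsubs1').pow 2))).mul
      (hrpowC.mono hsubs1)
  -- FTC on each piece
  have hΦint : IntervalIntegrable Φ volume 0 s := by
    apply ContinuousOn.intervalIntegrable
    rwa [uIcc_of_le hs0.le]
  have hΨint : IntervalIntegrable Ψ volume s 1 := by
    apply ContinuousOn.intervalIntegrable
    rwa [uIcc_of_le hs1.le]
  have hFTC₁ : ∫ r in Ioo (0:ℝ) s, Φ r = H₁ s := by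
    have h := intervalIntegral.integral_eq_sub_of_hasDeriv_right_of_le hs0.le hH₁c
      (fun x hx => (hH₁d x ⟨hx.1, hx.2.trans hs1⟩).hasDerivWithinAt) hΦint
    have h0 : H₁ 0 = 0 := by simp [hH₁def, Real.zero_rpow he0]
    rw [intervalIntegral.integral_of_le hs0.le, integral_Ioc_eq_integral_Ioo] at h
    rw [h, h0, sub_zero]
  have hFTC₂ : ∫ r in Ioo s 1, Ψ r = - H₂ s := by
    have h := intervalIntegral.integral_eq_sub_of_hasDeriv_right_of_le hs1.le hH₂c
      (fun x hx => (hH₂d x ⟨hs0.trans hx.1, hx.2⟩).hasDerivWithinAt) hΨint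
    have h1 : H₂ 1 = 0 := by simp [hH₂def, hpair.bc_zeta]
    rw [intervalIntegral.integral_of_le hs1.le, integral_Ioc_eq_integral_Ioo] at h
    rw [h, h1, zero_sub]
  -- identify the integrand with Φ/ξ(s)² and Ψ/ζ(s)² on the two pieces
  have hxs : 0 < ξ s := hpair.pos_xi s ⟨hs0, hs1.le⟩
  have hzs : 0 < ζ s := hpair.pos_zeta s ⟨hs0, hs1.le⟩
  set f : ℝ → ℝ := fun r => (deriv g r ^ 2 + V r * g r ^ 2) * r ^ e with hf
  have hfx : ∀ r ∈ Ioo (0:ℝ) s, f r = Φ r / (ξ s) ^ 2 := by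
    intro r hr
    have hr' : r ∈ Ioo (0:ℝ) 1 := ⟨hr.1, hr.2.trans hs1⟩
    have hev : g =ᶠ[𝓝 r] fun x => ξ x / ξ s := by
      filter_upwards [Iio_mem_nhds hr.2] with x hx
      rw [hg x, if_pos hx.le]
    have hd : deriv g r = ξ' r / ξ s := by
      rw [hev.deriv_eq]
      exact ((hx1 r hr').div_const (ξ s)).deriv
    have hgr : g r = ξ r / ξ s := by rw [hg r, if_pos hr.2.le]
    simp only [hf, hΦ, hd, hgr, div_pow]
    field_simp
    try ring
  have hfz : ∀ r ∈ Ioo s 1, f r = Ψ r / (ζ s) ^ 2 := by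
    intro r hr
    have hr' : r ∈ Ioo (0:ℝ) 1 := ⟨hs0.trans hr.1, hr.2⟩
    have hev : g =ᶠ[𝓝 r] fun x => ζ x / ζ s := by
      filter_upwards [Ioi_mem_nhds hr.1] with x hx
      rw [hg x, if_neg (not_le.mpr hx)]
    have hd : deriv g r = ζ' r / ζ s := by
      rw [hev.deriv_eq]
      exact ((hz1 r hr').div_const (ζ s)).deriv
    have hgr : g r = ζ r / ζ s := by rw [hg r, if_neg (not_le.mpr hr.1)]
    simp only [hf, hΨ, hd, hgr, div_pow]
    field_simp
    try ring
  -- integrability of f on each piece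
  have hint₁ : IntegrableOn f (Ioo 0 s) := by
    refine IntegrableOn.congr_fun ?_ (fun r hr => (hfx r hr).symm) measurableSet_Ioo
    exact ((hΦc.integrableOn_Icc).mono_set Ioo_subset_Icc_self).div_const _
  have hint₂ : IntegrableOn f (Ioo s 1) := by
    refine IntegrableOn.congr_fun ?_ (fun r hr => (hfz r hr).symm) measurableSet_Ioo
    exact ((hΨc.integrableOn_Icc).mono_set Ioo_subset_Icc_self).div_const _
  -- split the integral
  have hsplit : (Ioo (0:ℝ) 1 : Set ℝ) =ᵐ[volume] (Ioo 0 s ∪ Ioo s 1 : Set ℝ) := by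
    rw [MeasureTheory.ae_eq_set]
    constructor
    · refine measure_mono_null ?_ (measure_singleton s)
      intro x hx
      simp only [mem_diff, mem_Ioo, mem_union, not_or, not_and, not_lt] at hx
      have h1 := hx.2.1
      have h2 := hx.2.2
      simp only [mem_singleton_iff]
      rcases lt_trichotomy x s with h | h | h
      · exact absurd (h1 hx.1.1) (not_le.mpr h)
      · exact h
      · exact absurd (h2 h) (not_le.mpr hx.1.2)
    · have : (Ioo 0 s ∪ Ioo s 1 : Set ℝ) ⊆ Ioo 0 1 :=
        union_subset (Ioo_subset_Ioo_right hs1.le) (Ioo_subset_Ioo_left hs0.le)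
      simp [diff_eq_empty.mpr this]
  have hdisj : Disjoint (Ioo (0:ℝ) s) (Ioo s 1) :=
    Set.disjoint_left.mpr fun x hx hx' => absurd hx.2 (not_lt.mpr hx'.1.le)
  have key : ∫ r in Ioo (0:ℝ) 1, f r
      = (∫ r in Ioo (0:ℝ) s, Φ r) / (ξ s) ^ 2 + (∫ r in Ioo s 1, Ψ r) / (ζ s) ^ 2 := by
    rw [MeasureTheory.setIntegral_congr_set hsplit,
      MeasureTheory.setIntegral_union hdisj measurableSet_Ioo hint₁ hint₂]
    congr 1
    · rw [MeasureTheory.setIntegral_congr_fun measurableSet_Ioo hfx]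
      exact MeasureTheory.integral_div _ _
    · rw [MeasureTheory.setIntegral_congr_fun measurableSet_Ioo hfz]
      exact MeasureTheory.integral_div _ _
  -- final algebra with the Wronskian
  have hW : ξ' s * ζ s - ξ s * ζ' s = s ^ (1 - (n:ℝ)) := hpair.wronskian s ⟨hs0, hs1.le⟩
  have hse : s ^ e * s ^ (1 - (n:ℝ)) = 1 := by
    rw [← Real.rpow_add hs0, he]
    norm_num
  calc ∫ r in Ioo (0:ℝ) 1, f r
      = (∫ r in Ioo (0:ℝ) s, Φ r) / (ξ s) ^ 2 + (∫ r in Ioo s 1, Ψ r) / (ζ s) ^ 2 := key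
    _ = H₁ s / (ξ s) ^ 2 + (- H₂ s) / (ζ s) ^ 2 := by rw [hFTC₁, hFTC₂]
    _ = s ^ e * (ξ' s * ζ s - ξ s * ζ' s) / (ξ s * ζ s) := by
        simp only [hH₁def, hH₂def]
        field_simp
        ring
    _ = 1 / (ξ s * ζ s) := by rw [hW, hse]
end

section
/- Assume (ξ, ζ) is a Neumann pair for V. Then ξ'(r) ≥ 0 and ζ'(r) ≤ 0 for all r ∈ (0,1]; in particular ξ is nondecreasing and ζ is nonincreasing on (0,1], and consequently G(r,s) ≤ G(s,s) for all r, s ∈ (0,1]. -/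
open Set Filter MeasureTheory Topology

lemma aux_mono {m : ℕ} {V u u' u'' : ℝ → ℝ}
    (hu'' : ∀ r ∈ Ioc (0:ℝ) 1, HasDerivWithinAt u' (u'' r) (Ioc 0 1) r)
    (hode : ∀ r ∈ Ioc (0:ℝ) 1, -u'' r - (((((m+2):ℕ):ℝ) - 1) / r) * u' r + V r * u r = 0)
    (hV : ∀ r ∈ Icc (0:ℝ) 1, 0 ≤ V r)
    (hupos : ∀ r ∈ Ioc (0:ℝ) 1, 0 < u r) :
    MonotoneOn (fun r => r ^ (m+1) * u' r) (Ioc (0:ℝ) 1) := by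
  have hderiv : ∀ r ∈ Ioo (0:ℝ) 1,
      HasDerivAt (fun r => r ^ (m+1) * u' r)
        ((((m+1):ℕ):ℝ) * r ^ m * u' r + r ^ (m+1) * u'' r) r := by
    intro r hr
    have hmem : Ioc (0:ℝ) 1 ∈ 𝓝 r := Ioc_mem_nhds hr.1 hr.2
    have h1 : HasDerivAt u' (u'' r) r := (hu'' r ⟨hr.1, hr.2.le⟩).hasDerivAt hmem
    have h2 : HasDerivAt (fun x : ℝ => x ^ (m+1)) ((((m+1):ℕ):ℝ) * r ^ m) r := by
      simpa using hasDerivAt_pow (m+1) r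
    exact h2.mul h1
  apply monotoneOn_of_deriv_nonneg (convex_Ioc 0 1)
  · exact (continuous_pow (m+1)).continuousOn.mul
      (fun r hr => (hu'' r hr).continuousWithinAt)
  · rw [interior_Ioc]
    exact fun r hr => (hderiv r hr).differentiableAt.differentiableWithinAt
  · rw [interior_Ioc]
    intro r hr
    rw [(hderiv r hr).deriv]
    have hr' : r ∈ Ioc (0:ℝ) 1 := ⟨hr.1, hr.2.le⟩
    have hode' := hode r hr'
    have hr0 : (r:ℝ) ≠ 0 := ne_of_gt hr.1
    have hsub : u'' r = V r * u r - (((m:ℝ)+1) / r) * u' r := by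
      push_cast at hode'
      have hc : ((m:ℝ) + 2 - 1) = (m:ℝ) + 1 := by ring
      rw [hc] at hode'
      linarith
    have key : (((m+1):ℕ):ℝ) * r ^ m * u' r + r ^ (m+1) * u'' r
        = r ^ (m+1) * (V r * u r) := by
      rw [hsub, pow_succ]
      push_cast
      field_simp
      ring
    rw [key]
    exact mul_nonneg (pow_nonneg hr.1.le _)
      (mul_nonneg (hV r ⟨hr.1.le, hr'.2⟩) (hupos r hr').le)


/-- Monotonicity of a Neumann pair: `ξ' ≥ 0` and `ζ' ≤ 0` on `(0,1]`, so `ξ` is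
nondecreasing and `ζ` is nonincreasing on `(0,1]`; consequently the Green function
`G(r,s) = s^(n-1) ξ(min r s) ζ(max r s)` satisfies `G(r,s) ≤ G(s,s)` for all
`r, s ∈ (0,1]`. -/
theorem neumann_pair_monotone (n : ℕ) (hn : 2 ≤ n) (V ξ ζ ξ' ζ' ξ'' ζ'' : ℝ → ℝ)
    (hVcont : ContinuousOn V (Icc 0 1))
    (hVnonneg : ∀ r ∈ Icc (0:ℝ) 1, 0 ≤ V r)
    (hVnontriv : ∃ r ∈ Icc (0:ℝ) 1, V r ≠ 0)
    (hpair : NeumannPair n V ξ ζ ξ' ζ' ξ'' ζ'') :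
    (∀ r ∈ Ioc (0:ℝ) 1, 0 ≤ ξ' r) ∧
    (∀ r ∈ Ioc (0:ℝ) 1, ζ' r ≤ 0) ∧
    MonotoneOn ξ (Ioc (0:ℝ) 1) ∧
    AntitoneOn ζ (Ioc (0:ℝ) 1) ∧
    (∀ r ∈ Ioc (0:ℝ) 1, ∀ s ∈ Ioc (0:ℝ) 1,
      s ^ ((n:ℝ) - 1) * (ξ (min r s) * ζ (max r s)) ≤ s ^ ((n:ℝ) - 1) * (ξ s * ζ s)) := by
  obtain ⟨m, rfl⟩ : ∃ m, n = m + 2 := ⟨n - 2, by omega⟩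
  -- monotone auxiliary functions
  have hw1 : MonotoneOn (fun r => r ^ (m+1) * ξ' r) (Ioc (0:ℝ) 1) :=
    aux_mono hpair.deriv2_xi hpair.ode_xi hVnonneg hpair.pos_xi
  have hw2 : MonotoneOn (fun r => r ^ (m+1) * ζ' r) (Ioc (0:ℝ) 1) :=
    aux_mono hpair.deriv2_zeta hpair.ode_zeta hVnonneg hpair.pos_zeta
  -- ξ' ≥ 0
  have hxi' : ∀ r ∈ Ioc (0:ℝ) 1, 0 ≤ ξ' r := by
    intro r hr
    have htend : Tendsto (fun s => s ^ (m+1) * ξ' s) (𝓝[>] (0:ℝ)) (𝓝 0) := by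
      have h1 : Tendsto (fun s : ℝ => s ^ (m+1)) (𝓝[>] (0:ℝ)) (𝓝 0) := by
        have := ((continuous_pow (m+1)).tendsto (0:ℝ)).mono_left
          (nhdsWithin_le_nhds (s := Ioi (0:ℝ)))
        simpa using this
      simpa using h1.mul hpair.bc_xi
    have hle : ∀ᶠ s in 𝓝[>] (0:ℝ), s ^ (m+1) * ξ' s ≤ r ^ (m+1) * ξ' r := by
      filter_upwards [Ioo_mem_nhdsGT_of_mem (show (0:ℝ) ∈ Ico 0 r from ⟨le_refl 0, hr.1⟩)]
        with s hs
      exact hw1 ⟨hs.1, le_trans hs.2.le hr.2⟩ hr hs.2.le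
    have h0 : (0:ℝ) ≤ r ^ (m+1) * ξ' r := le_of_tendsto htend hle
    nlinarith [pow_pos hr.1 (m+1)]
  -- ζ' ≤ 0
  have hzeta' : ∀ r ∈ Ioc (0:ℝ) 1, ζ' r ≤ 0 := by
    intro r hr
    have h1 : r ^ (m+1) * ζ' r ≤ 1 ^ (m+1) * ζ' 1 :=
      hw2 hr (by constructor <;> norm_num) hr.2
    rw [hpair.bc_zeta] at h1
    simp at h1
    nlinarith [pow_pos hr.1 (m+1)]
  -- Monotone ξ
  have hmono : MonotoneOn ξ (Ioc (0:ℝ) 1) := by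
    apply monotoneOn_of_deriv_nonneg (convex_Ioc 0 1)
      (hpair.cont_xi.mono Ioc_subset_Icc_self)
    · rw [interior_Ioc]
      intro r hr
      exact (((hpair.deriv_xi r ⟨hr.1, hr.2.le⟩).hasDerivAt
        (Ioc_mem_nhds hr.1 hr.2)).differentiableAt).differentiableWithinAt
    · rw [interior_Ioc]
      intro r hr
      rw [((hpair.deriv_xi r ⟨hr.1, hr.2.le⟩).hasDerivAt (Ioc_mem_nhds hr.1 hr.2)).deriv]
      exact hxi' r ⟨hr.1, hr.2.le⟩
  -- Antitone ζ
  have hanti : AntitoneOn ζ (Ioc (0:ℝ) 1) := by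
    apply antitoneOn_of_deriv_nonpos (convex_Ioc 0 1)
      (hpair.cont_zeta.mono Ioc_subset_Icc_self)
    · rw [interior_Ioc]
      intro r hr
      exact (((hpair.deriv_zeta r ⟨hr.1, hr.2.le⟩).hasDerivAt
        (Ioc_mem_nhds hr.1 hr.2)).differentiableAt).differentiableWithinAt
    · rw [interior_Ioc]
      intro r hr
      rw [((hpair.deriv_zeta r ⟨hr.1, hr.2.le⟩).hasDerivAt (Ioc_mem_nhds hr.1 hr.2)).deriv]
      exact hzeta' r ⟨hr.1, hr.2.le⟩
  refine ⟨hxi', hzeta', hmono, hanti, ?_⟩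
  intro r hr s hs
  have hp : (0:ℝ) ≤ s ^ (((m+2:ℕ):ℝ) - 1) := (Real.rpow_pos_of_pos hs.1 _).le
  apply mul_le_mul_of_nonneg_left _ hp
  rcases le_total r s with h | h
  · rw [min_eq_left h, max_eq_right h]
    exact mul_le_mul_of_nonneg_right (hmono hr hs h) (hpair.pos_zeta s hs).le
  · rw [min_eq_right h, max_eq_left h]
    exact mul_le_mul_of_nonneg_left (hanti hs hr h) (hpair.pos_xi s hs).le
end

section
/- Let n ≥ 2, let B₁ ⊂ ℝⁿ be the open unit ball, fix 0 < R₁ < R₂ < 1, let A = {x ∈ ℝⁿ : R₁ < |x| < R₂}, and fix c ∈ (0,1). Let u : B₁ → ℝ be measurable with 0 ≤ u(x) ≤ 1 for a.e. x, with essential supremum of u over B₁ equal to 1, and with u(x) ≤ c for a.e. x ∈ B₁ \ A. Let φ = min(u, c) and, for σ ≥ 0, define w_σ : B₁ → ℝ by w_σ = u on B₁ \ A and w_σ = u + σ·(u − φ) on A. Then: (i) for every p > 1 there exists σ_p ≥ 0 such that |B₁|⁻¹·∫_{B₁} w_{σ_p}^{p+1} dx = 1; and (ii) for any choice of such numbers,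 σ_p → 0 as p → ∞. -/
open Set Filter MeasureTheory Topology

set_option maxHeartbeats 1000000

/-- Approximation lemma: let `u` be measurable on the unit ball `B₁ ⊂ ℝⁿ` with
`0 ≤ u ≤ 1` a.e., `essSup u = 1` on `B₁`, and `u ≤ c` a.e. off the annulus
`A = {R₁ < |x| < R₂}`. With `φ = min(u, c)` and `w_σ = u` on `B₁ \ A`,
`w_σ = u + σ(u - φ)` on `A`, we have: (i) for every `p > 1` there is `σ_p ≥ 0` with
`|B₁|⁻¹ ∫_{B₁} w_{σ_p}^{p+1} = 1`; (ii) for any choice of such `σ_p`, `σ_p → 0` as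
`p → ∞`. -/
theorem approximating_sequence (n : ℕ) (hn : 2 ≤ n) (R₁ R₂ c : ℝ)
    (hR₁ : 0 < R₁) (hR₁₂ : R₁ < R₂) (hR₂ : R₂ < 1) (hc : c ∈ Ioo (0:ℝ) 1)
    (u : EuclideanSpace ℝ (Fin n) → ℝ) (hmeas : Measurable u)
    (h01 : ∀ᵐ x ∂(volume.restrict (Metric.ball (0 : EuclideanSpace ℝ (Fin n)) 1)),
      0 ≤ u x ∧ u x ≤ 1)
    (hsup : essSup u (volume.restrict (Metric.ball (0 : EuclideanSpace ℝ (Fin n)) 1)) = 1)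
    (hle : ∀ᵐ x ∂(volume.restrict
        (Metric.ball (0 : EuclideanSpace ℝ (Fin n)) 1 \
          {x : EuclideanSpace ℝ (Fin n) | R₁ < ‖x‖ ∧ ‖x‖ < R₂})), u x ≤ c)
    (w : ℝ → EuclideanSpace ℝ (Fin n) → ℝ)
    (hw : ∀ σ x, w σ x =
      if R₁ < ‖x‖ ∧ ‖x‖ < R₂ then u x + σ * (u x - min (u x) c) else u x) :
    (∀ p > (1:ℝ), ∃ σ ≥ (0:ℝ),
      (volume (Metric.ball (0 : EuclideanSpace ℝ (Fin n)) 1)).toReal⁻¹ *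
        ∫ x in Metric.ball (0 : EuclideanSpace ℝ (Fin n)) 1, w σ x ^ (p + 1) = 1) ∧
    (∀ σf : ℝ → ℝ,
      (∀ p > (1:ℝ), 0 ≤ σf p ∧
        (volume (Metric.ball (0 : EuclideanSpace ℝ (Fin n)) 1)).toReal⁻¹ *
          ∫ x in Metric.ball (0 : EuclideanSpace ℝ (Fin n)) 1, w (σf p) x ^ (p + 1) = 1) →
      Tendsto σf atTop (𝓝 0)) := by
  obtain ⟨hc0, hc1⟩ := hc
  set B : Set (EuclideanSpace ℝ (Fin n)) := Metric.ball 0 1 with hBdef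
  set A : Set (EuclideanSpace ℝ (Fin n)) := {x | R₁ < ‖x‖ ∧ ‖x‖ < R₂} with hAdef
  have hAm : MeasurableSet A := (isOpen_Ioo.preimage continuous_norm : IsOpen A).measurableSet
  have hBm : MeasurableSet B := measurableSet_ball
  haveI : IsFiniteMeasure (volume.restrict B) :=
    ⟨by rw [Measure.restrict_apply_univ]; exact measure_ball_lt_top⟩
  have hμ0 : volume.restrict B ≠ 0 := by
    intro h
    have : volume B = 0 := by rw [← Measure.restrict_apply_univ, h]; simp
    exact absurd this (Metric.measure_ball_pos volume 0 one_pos).ne'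
  haveI : (ae (volume.restrict B)).NeBot := ae_neBot.mpr hμ0
  have hV : 0 < (volume B).toReal :=
    ENNReal.toReal_pos (Metric.measure_ball_pos volume 0 one_pos).ne' measure_ball_lt_top.ne
  have hwmeas : ∀ σ, Measurable (w σ) := by
    intro σ
    rw [show w σ = fun x => if R₁ < ‖x‖ ∧ ‖x‖ < R₂ then u x + σ * (u x - min (u x) c) else u x
      from funext (hw σ)]
    exact Measurable.ite hAm
      (hmeas.add (measurable_const.mul (hmeas.sub (hmeas.min measurable_const)))) hmeas
  have hwq : ∀ σ (q : ℝ), 0 ≤ q → Measurable (fun x => w σ x ^ q) := fun σ q hq =>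
    (Real.continuous_rpow_const hq).measurable.comp (hwmeas σ)
  have h0 : ∀ᵐ x ∂(volume.restrict B), 0 ≤ u x := h01.mono fun x h => h.1
  have hoffA : ∀ᵐ x ∂(volume.restrict B), x ∉ A → u x ≤ c := by
    apply (ae_restrict_iff' hAm.compl).mp
    have : volume.restrict (B \ A) = (volume.restrict B).restrict Aᶜ := by
      rw [Measure.restrict_restrict hAm.compl, Set.inter_comm, ← Set.diff_eq]
    rw [← this]; exact hle
  have habs : ∀ σ, ∀ᵐ x ∂(volume.restrict B), |w σ x| ≤ 1 + |σ| := by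
    intro σ
    filter_upwards [h01] with x hx
    obtain ⟨hx0, hx1⟩ := hx
    have hm1 : min (u x) c ≤ u x := min_le_left _ _
    have hm0 : 0 ≤ min (u x) c := le_min hx0 hc0.le
    rw [hw]
    split
    · have h1 : |u x| ≤ 1 := abs_le.mpr ⟨by linarith, hx1⟩
      have h2 : |u x - min (u x) c| ≤ 1 := abs_le.mpr ⟨by linarith, by linarith⟩
      calc |u x + σ * (u x - min (u x) c)| ≤ |u x| + |σ| * |u x - min (u x) c| := by
            refine (abs_add_le _ _).trans ?_
            rw [abs_mul]
        _ ≤ 1 + |σ| * 1 := by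
            refine add_le_add h1 (mul_le_mul_of_nonneg_left h2 (abs_nonneg σ))
        _ = 1 + |σ| := by ring
    · have : |u x| ≤ 1 := abs_le.mpr ⟨by linarith, hx1⟩
      nlinarith [abs_nonneg σ]
  have hInt : ∀ σ (q : ℝ), 0 ≤ q → Integrable (fun x => w σ x ^ q) (volume.restrict B) := by
    intro σ q hq
    refine Integrable.mono' (integrable_const ((1 + |σ|) ^ q))
      ((hwq σ q hq).aestronglyMeasurable) ?_
    filter_upwards [habs σ] with x hx
    calc ‖w σ x ^ q‖ = |w σ x ^ q| := Real.norm_eq_abs _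
      _ ≤ |w σ x| ^ q := Real.abs_rpow_le_abs_rpow _ _
      _ ≤ (1 + |σ|) ^ q := Real.rpow_le_rpow (abs_nonneg _) hx hq
  have hW : ∀ σ, 0 ≤ σ → ∀ᵐ x ∂(volume.restrict B), 0 ≤ w σ x ∧ w σ x ≤ 1 + σ := by
    intro σ hσ
    filter_upwards [h01] with x hx
    obtain ⟨hx0, hx1⟩ := hx
    have hm1 : min (u x) c ≤ u x := min_le_left _ _
    have hm0 : 0 ≤ min (u x) c := le_min hx0 hc0.le
    rw [hw]
    split
    · constructor
      · nlinarith
      · nlinarith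
    · exact ⟨hx0, by linarith⟩
  have hEss : ∀ b : ℝ, b < 1 → c ≤ b → 0 < volume.restrict B (A ∩ {x | b < u x}) := by
    intro b hb1 hcb
    have hne : volume.restrict B {x | b < u x} ≠ 0 := by
      intro h0'
      have hae : ∀ᵐ x ∂(volume.restrict B), u x ≤ b := by
        rw [ae_iff]
        convert h0' using 2
        ext x; simp [not_le]
      have hbdd : IsCoboundedUnder (· ≤ ·) (ae (volume.restrict B)) u :=
        IsBoundedUnder.isCoboundedUnder_le ⟨0, h0⟩
      have : essSup u (volume.restrict B) ≤ b := limsup_le_of_le hbdd hae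
      rw [hsup] at this
      linarith
    rw [pos_iff_ne_zero]
    intro hz
    apply hne
    have hcompl : volume.restrict B (Aᶜ ∩ {x | b < u x}) = 0 := by
      have h0' : volume.restrict B {x | ¬ (x ∉ A → u x ≤ c)} = 0 := ae_iff.mp hoffA
      refine measure_mono_null ?_ h0'
      intro x hx
      simp only [Set.mem_setOf_eq, Classical.not_imp, not_le]
      exact ⟨hx.1, lt_of_le_of_lt hcb hx.2⟩
    have hsub : {x | b < u x} ⊆ (A ∩ {x | b < u x}) ∪ (Aᶜ ∩ {x | b < u x}) := by
      intro x hx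
      by_cases hxA : x ∈ A
      · exact Or.inl ⟨hxA, hx⟩
      · exact Or.inr ⟨hxA, hx⟩
    refine le_antisymm ?_ (zero_le)
    calc volume.restrict B {x | b < u x}
        ≤ volume.restrict B ((A ∩ {x | b < u x}) ∪ (Aᶜ ∩ {x | b < u x})) := measure_mono hsub
      _ ≤ volume.restrict B (A ∩ {x | b < u x}) + volume.restrict B (Aᶜ ∩ {x | b < u x}) :=
          measure_union_le _ _
      _ = 0 := by rw [hz, hcompl, add_zero]
  have key : ∀ (b σ q' : ℝ), c < b → 0 ≤ σ → 1 ≤ q' →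
      (b + σ * (b - c)) ^ q' * (volume.restrict B (A ∩ {x | b < u x})).toReal ≤
        ∫ x in B, w σ x ^ q' := by
    intro b σ q' hcb hσ hq'
    set T : Set (EuclideanSpace ℝ (Fin n)) := A ∩ {x | b < u x} with hT
    have hTm : MeasurableSet T := hAm.inter (measurableSet_lt measurable_const hmeas)
    have hK0 : 0 ≤ b + σ * (b - c) := by nlinarith
    have step1 : ∀ x ∈ T, (b + σ * (b - c)) ^ q' ≤ w σ x ^ q' := by
      intro x hx
      obtain ⟨hxA, hxu⟩ := hx
      have hxu' : b < u x := hxu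
      have hwx : w σ x = u x + σ * (u x - c) := by
        rw [hw, if_pos (show R₁ < ‖x‖ ∧ ‖x‖ < R₂ from hxA), min_eq_right (le_of_lt (lt_of_le_of_lt hcb.le hxu'))]
      refine Real.rpow_le_rpow hK0 ?_ (by linarith)
      rw [hwx]
      nlinarith
    have step2 : (b + σ * (b - c)) ^ q' * (volume.restrict B T).toReal ≤
        ∫ x in T, w σ x ^ q' ∂(volume.restrict B) :=
      by have h := setIntegral_ge_of_const_le_real hTm (measure_ne_top _ _) step1 ((hInt σ q' (by linarith)).integrableOn); exact h
    have step3 : ∫ x in T, w σ x ^ q' ∂(volume.restrict B) ≤ ∫ x in B, w σ x ^ q' := by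
      refine setIntegral_le_integral (hInt σ q' (by linarith)) ?_
      filter_upwards [hW σ hσ] with x hx
      exact Real.rpow_nonneg hx.1 _
    exact step2.trans step3
  constructor
  · -- Part (i): existence via IVT
    intro p hp
    have hq : (0:ℝ) < p + 1 := by linarith
    have hq1 : (1:ℝ) ≤ p + 1 := by linarith
    set b : ℝ := (1 + c) / 2 with hbdef
    have hcb : c < b := by rw [hbdef]; linarith
    have hb1 : b < 1 := by rw [hbdef]; linarith
    have hbc : 0 < b - c := by linarith
    have hb0 : 0 < b := by linarith
    set m : ℝ := (volume.restrict B (A ∩ {x | b < u x})).toReal with hmdef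
    have hm : 0 < m :=
      ENNReal.toReal_pos (hEss b hb1 hcb.le).ne' (measure_ne_top _ _)
    set V : ℝ := (volume B).toReal with hVdef
    set M : ℝ := (b - c)⁻¹ * (1 + V / m) with hMdef
    have hVm : 0 < 1 + V / m := by positivity
    have hM0 : 0 ≤ M := by positivity
    have hMbc : M * (b - c) = 1 + V / m := by
      rw [hMdef]; field_simp
    have hKM : 1 + V / m ≤ b + M * (b - c) := by rw [hMbc]; linarith
    have hK1 : 1 ≤ b + M * (b - c) := by
      have : 0 ≤ V / m := by positivity
      linarith
    have hFM : V ≤ ∫ x in B, w M x ^ (p + 1) := by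
      calc V ≤ (1 + V / m) * m := by
            have : (1 + V / m) * m = m + V := by field_simp
            rw [this]; linarith
        _ ≤ (b + M * (b - c)) * m := mul_le_mul_of_nonneg_right hKM hm.le
        _ = (b + M * (b - c)) ^ (1:ℝ) * m := by rw [Real.rpow_one]
        _ ≤ (b + M * (b - c)) ^ (p + 1) * m :=
            mul_le_mul_of_nonneg_right (Real.rpow_le_rpow_of_exponent_le hK1 hq1) hm.le
        _ ≤ ∫ x in B, w M x ^ (p + 1) := key b M (p + 1) hcb hM0 hq1
    have hF0 : ∫ x in B, w 0 x ^ (p + 1) ≤ V := by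
      calc ∫ x in B, w 0 x ^ (p + 1) ≤ ∫ _x in B, (1:ℝ) := by
            refine integral_mono_ae (hInt 0 _ hq.le) (integrable_const 1) ?_
            filter_upwards [hW 0 le_rfl] with x hx
            exact Real.rpow_le_one hx.1 (by linarith [hx.2]) hq.le
        _ = V := by simp [Measure.restrict_apply_univ, hVdef, measureReal_def]
    have hFcont : Continuous fun σ => ∫ x in B, w σ x ^ (p + 1) := by
      rw [continuous_iff_continuousAt]
      intro σ₀
      have hball : ∀ᶠ σ in 𝓝 σ₀, |σ| ≤ |σ₀| + 1 := by
        filter_upwards [Metric.ball_mem_nhds σ₀ one_pos] with σ hσ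
        have h1 : |σ - σ₀| < 1 := by rwa [Metric.mem_ball, Real.dist_eq] at hσ
        have h2 : |σ| ≤ |σ₀| + |σ - σ₀| := by
          calc |σ| = |σ₀ + (σ - σ₀)| := by ring_nf
            _ ≤ |σ₀| + |σ - σ₀| := abs_add_le _ _
        linarith
      have hbnd : ∀ᶠ σ in 𝓝 σ₀, ∀ᵐ x ∂(volume.restrict B),
          ‖w σ x ^ (p + 1)‖ ≤ (1 + (|σ₀| + 1)) ^ (p + 1) := by
        filter_upwards [hball] with σ hσ
        filter_upwards [habs σ] with x hx
        calc ‖w σ x ^ (p + 1)‖ = |w σ x ^ (p + 1)| := Real.norm_eq_abs _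
          _ ≤ |w σ x| ^ (p + 1) := Real.abs_rpow_le_abs_rpow _ _
          _ ≤ (1 + (|σ₀| + 1)) ^ (p + 1) :=
              Real.rpow_le_rpow (abs_nonneg _) (by linarith) hq.le
      apply continuousAt_of_dominated (bound := fun _ => (1 + (|σ₀| + 1)) ^ (p + 1))
      · exact Eventually.of_forall fun σ => (hwq σ _ hq.le).aestronglyMeasurable
      · exact hbnd
      · exact integrable_const _
      · refine Eventually.of_forall fun x => ?_
        have hcw : ContinuousAt (fun σ => w σ x) σ₀ := by
          by_cases hxA : R₁ < ‖x‖ ∧ ‖x‖ < R₂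
          · have he : (fun σ => w σ x) = fun σ => u x + σ * (u x - min (u x) c) := by
              funext σ; rw [hw, if_pos hxA]
            rw [he]; fun_prop
          · have he : (fun σ => w σ x) = fun _ => u x := by
              funext σ; rw [hw, if_neg hxA]
            rw [he]; exact continuousAt_const
        exact ((Real.continuous_rpow_const hq.le).continuousAt).comp hcw
    have hGcont : Continuous fun σ => V⁻¹ * ∫ x in B, w σ x ^ (p + 1) :=
      continuous_const.mul hFcont
    have h1mem : (1:ℝ) ∈ Icc (V⁻¹ * ∫ x in B, w 0 x ^ (p + 1))
        (V⁻¹ * ∫ x in B, w M x ^ (p + 1)) := by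
      constructor
      · calc V⁻¹ * ∫ x in B, w 0 x ^ (p + 1) ≤ V⁻¹ * V :=
            mul_le_mul_of_nonneg_left hF0 (inv_nonneg.mpr hV.le)
          _ = 1 := inv_mul_cancel₀ hV.ne'
      · calc (1:ℝ) = V⁻¹ * V := (inv_mul_cancel₀ hV.ne').symm
          _ ≤ V⁻¹ * ∫ x in B, w M x ^ (p + 1) :=
            mul_le_mul_of_nonneg_left hFM (inv_nonneg.mpr hV.le)
    obtain ⟨σ, hσmem, hσeq⟩ := intermediate_value_Icc hM0 hGcont.continuousOn h1mem
    exact ⟨σ, hσmem.1, hσeq⟩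
  · -- Part (ii): σ_p → 0
    intro σf hσf
    rw [NormedAddCommGroup.tendsto_nhds_zero]
    intro ε hε
    have h1c : (0:ℝ) < 1 - c := by linarith
    set δ : ℝ := ε * (1 - c) / (2 * (1 + ε)) with hδdef
    have hε1 : (0:ℝ) < 1 + ε := by linarith
    have hδ0 : 0 < δ := by rw [hδdef]; positivity
    have hδlt : δ < (1 - c) / 2 := by
      rw [hδdef, div_lt_div_iff₀ (by linarith) (by linarith)]
      nlinarith
    set b : ℝ := 1 - δ with hbdef
    have hcb : c < b := by rw [hbdef]; linarith
    have hb1 : b < 1 := by rw [hbdef]; linarith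
    have hbc : 0 < b - c := by linarith
    set K : ℝ := b + ε * (b - c) with hKdef
    have hKval : K = 1 + ε * (1 - c) / 2 := by
      rw [hKdef, hbdef, hδdef]; field_simp; ring
    have hK1 : 1 < K := by rw [hKval]; nlinarith
    set m : ℝ := (volume.restrict B (A ∩ {x | b < u x})).toReal with hmdef
    have hm : 0 < m :=
      ENNReal.toReal_pos (hEss b hb1 hcb.le).ne' (measure_ne_top _ _)
    have htend : Tendsto (fun p : ℝ => K ^ (p + 1) * m) atTop atTop := by
      apply Tendsto.atTop_mul_const hm
      have hKpos : (0:ℝ) < K := by linarith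
      have he : (fun p : ℝ => K ^ (p + 1)) = fun p => Real.exp ((p + 1) * Real.log K) := by
        funext p; rw [Real.rpow_def_of_pos hKpos]; ring_nf
      rw [he]
      exact Real.tendsto_exp_atTop.comp
        ((tendsto_atTop_add_const_right atTop 1 tendsto_id).atTop_mul_const (Real.log_pos hK1))
    filter_upwards [htend.eventually_gt_atTop (volume B).toReal,
      eventually_gt_atTop (1:ℝ)] with p hpV hp1
    obtain ⟨hσ0, hσeq⟩ := hσf p hp1
    rw [Real.norm_eq_abs, abs_of_nonneg hσ0]
    by_contra hcon
    push_neg at hcon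
    have hFeq : ∫ x in B, w (σf p) x ^ (p + 1) = (volume B).toReal := by
      have h := hσeq
      rw [inv_mul_eq_one₀ hV.ne'] at h
      exact h.symm
    have hσε : 0 ≤ σf p := hσ0
    have hkey := key b (σf p) (p + 1) hcb hσ0 (by linarith)
    rw [hFeq] at hkey
    have hKle : K ≤ b + σf p * (b - c) := by
      rw [hKdef]; nlinarith
    have hmono : K ^ (p + 1) * m ≤ (b + σf p * (b - c)) ^ (p + 1) * m := by
      refine mul_le_mul_of_nonneg_right (Real.rpow_le_rpow (by linarith) hKle (by linarith)) hm.le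
    rw [← hmdef] at hkey
    linarith
end
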